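/- Let h be a positive semidefinite rank-2 operator on ℂ² ⊗ ℂ² that is not a tensor product of single-qubit operators. Then the range of h contains two linearly independent entangled vectors (i.e., vectors that are not simple tensors). -/

import Mathlib

open scoped ComplexOrder Kronecker
open Matrix

/-- The "determinant" of a vector on `Fin 2 × Fin 2` viewed as a 2×2 matrix. -/
private def Dt (ψ : Fin 2 × Fin 2 → ℂ) : ℂ :=
  ψ (0,0) * ψ (1,1) - ψ (0,1) * ψ (1,0)

private lemma Dt_of_prod {ψ : Fin 2 × Fin 2 → ℂ} (u v : Fin 2 → ℂ)
    (hp : ∀ p : Fin 2 × Fin 2, ψ p = u p.1 * v p.2) : Dt ψ = 0 := by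
  simp only [Dt, hp]; ring

private lemma entangled_of_Dt {ψ : Fin 2 × Fin 2 → ℂ} (hψ : Dt ψ ≠ 0) :
    ¬ ∃ u v : Fin 2 → ℂ, ∀ p : Fin 2 × Fin 2, ψ p = u p.1 * v p.2 := by
  rintro ⟨u, v, hp⟩
  exact hψ (Dt_of_prod u v hp)

private lemma prod_of_Dt {ψ : Fin 2 × Fin 2 → ℂ} (hψ : Dt ψ = 0) :
    ∃ u v : Fin 2 → ℂ, ∀ p : Fin 2 × Fin 2, ψ p = u p.1 * v p.2 := by
  simp only [Dt] at hψ
  by_cases h00 : ψ (0,0) ≠ 0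
  · refine ⟨![ψ (0,0), ψ (1,0)], ![1, ψ (0,1) / ψ (0,0)], ?_⟩
    have e00 : ψ (0,0) = ψ (0,0) * 1 := by ring
    have e01 : ψ (0,1) = ψ (0,0) * (ψ (0,1) / ψ (0,0)) := by
      rw [mul_comm, div_mul_cancel₀ _ h00]
    have e10 : ψ (1,0) = ψ (1,0) * 1 := by ring
    have e11 : ψ (1,1) = ψ (1,0) * (ψ (0,1) / ψ (0,0)) := by
      rw [mul_div_assoc', eq_div_iff h00]
      linear_combination hψ
    rintro ⟨i, j⟩
    fin_cases i <;> fin_cases j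
    · exact e00
    · exact e01
    · exact e10
    · exact e11
  · push_neg at h00
    by_cases h01 : ψ (0,1) ≠ 0
    · refine ⟨![ψ (0,1), ψ (1,1)], ![0, 1], ?_⟩
      have h10 : ψ (1,0) = 0 := by
        rw [h00] at hψ
        have h2 : ψ (0,1) * ψ (1,0) = 0 := by linear_combination -hψ
        rcases mul_eq_zero.mp h2 with hc | hc
        · exact absurd hc h01
        · exact hc
      have e00 : ψ (0,0) = ψ (0,1) * 0 := by rw [h00]; ring
      have e01 : ψ (0,1) = ψ (0,1) * 1 := by ring
      have e10 : ψ (1,0) = ψ (1,1) * 0 := by rw [h10]; ring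
      have e11 : ψ (1,1) = ψ (1,1) * 1 := by ring
      rintro ⟨i, j⟩
      fin_cases i <;> fin_cases j
      · exact e00
      · exact e01
      · exact e10
      · exact e11
    · push_neg at h01
      refine ⟨![0, 1], ![ψ (1,0), ψ (1,1)], ?_⟩
      have e00 : ψ (0,0) = 0 * ψ (1,0) := by rw [h00]; ring
      have e01 : ψ (0,1) = 0 * ψ (1,1) := by rw [h01]; ring
      have e10 : ψ (1,0) = 1 * ψ (1,0) := by ring
      have e11 : ψ (1,1) = 1 * ψ (1,1) := by ring
      rintro ⟨i, j⟩
      fin_cases i <;> fin_cases j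
      · exact e00
      · exact e01
      · exact e10
      · exact e11

private lemma prop_of_cross {u u' : Fin 2 → ℂ} (i₀ : Fin 2) (h0 : u i₀ ≠ 0)
    (hc : u 0 * u' 1 - u 1 * u' 0 = 0) : ∃ lam : ℂ, ∀ i, u' i = lam * u i := by
  by_cases h : u 0 ≠ 0
  · refine ⟨u' 0 / u 0, ?_⟩
    have p0 : u' 0 = u' 0 / u 0 * u 0 := by rw [div_mul_cancel₀ _ h]
    have p1 : u' 1 = u' 0 / u 0 * u 1 := by
      rw [div_mul_eq_mul_div, eq_div_iff h]
      linear_combination hc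
    intro i
    fin_cases i
    · exact p0
    · exact p1
  · push_neg at h
    have h1 : u 1 ≠ 0 := by
      fin_cases i₀
      · exact absurd h h0
      · exact h0
    have p0 : u' 0 = u' 1 / u 1 * u 0 := by
      rw [h] at hc
      have h2 : u 1 * u' 0 = 0 := by linear_combination -hc
      rcases mul_eq_zero.mp h2 with hx | hx
      · exact absurd hx h1
      · rw [h, hx]; ring
    have p1 : u' 1 = u' 1 / u 1 * u 1 := by rw [div_mul_cancel₀ _ h1]
    refine ⟨u' 1 / u 1, ?_⟩
    intro i
    fin_cases i
    · exact p0
    · exact p1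

/-- A Hermitian matrix whose every column factors through a fixed left vector `u`
is a Kronecker product. -/
private lemma herm_factor_left (h : Matrix (Fin 2 × Fin 2) (Fin 2 × Fin 2) ℂ)
    (hherm : h.IsHermitian) (u : Fin 2 → ℂ) (i₀ : Fin 2) (hu : u i₀ ≠ 0)
    (hcol : ∀ k l : Fin 2, ∃ g : Fin 2 → ℂ, ∀ i j : Fin 2, h (i,j) (k,l) = u i * g j) :
    ∃ hA hB : Matrix (Fin 2) (Fin 2) ℂ, h = hA ⊗ₖ hB := by
  have hs : ∀ p q, h p q = star (h q p) := fun p q => (hherm.apply p q).symm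
  have hstep : ∀ i j k l : Fin 2, h (i,j) (k,l) * u i₀ = u i * h (i₀,j) (k,l) := by
    intro i j k l
    obtain ⟨g, hg⟩ := hcol k l
    rw [hg, hg i₀]; ring
  have hsu : star (u i₀) ≠ 0 := star_ne_zero.mpr hu
  have key : ∀ i j k l : Fin 2,
      h (i,j) (k,l) * (u i₀ * star (u i₀))
        = u i * star (u k) * h (i₀,j) (i₀,l) := by
    intro i j k l
    have h1 : h (i,j) (k,l) * u i₀ = u i * h (i₀,j) (k,l) := hstep i j k l
    have h2 : h (k,l) (i₀,j) * u i₀ = u k * h (i₀,l) (i₀,j) := hstep k l i₀ j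
    have h3 : h (i₀,j) (k,l) = star (h (k,l) (i₀,j)) := hs _ _
    have h4 : h (i₀,j) (i₀,l) = star (h (i₀,l) (i₀,j)) := hs _ _
    have h2' : star (h (k,l) (i₀,j)) * star (u i₀)
        = star (u k) * star (h (i₀,l) (i₀,j)) := by
      rw [← star_mul', ← star_mul', h2]
    calc h (i,j) (k,l) * (u i₀ * star (u i₀))
        = (h (i,j) (k,l) * u i₀) * star (u i₀) := by ring
      _ = (u i * h (i₀,j) (k,l)) * star (u i₀) := by rw [h1]
      _ = u i * (star (h (k,l) (i₀,j)) * star (u i₀)) := by rw [h3]; ring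
      _ = u i * (star (u k) * star (h (i₀,l) (i₀,j))) := by rw [h2']
      _ = u i * star (u k) * h (i₀,j) (i₀,l) := by rw [h4]; ring
  refine ⟨Matrix.of fun i k => u i * star (u k) / (u i₀ * star (u i₀)),
    Matrix.of fun j l => h (i₀,j) (i₀,l), ?_⟩
  ext ⟨i, j⟩ ⟨k, l⟩
  rw [Matrix.kroneckerMap_apply]
  simp only [Matrix.of_apply]
  have hd : u i₀ * star (u i₀) ≠ 0 := mul_ne_zero hu hsu
  rw [div_mul_eq_mul_div, eq_div_iff hd]
  linear_combination key i j k l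

/-- a rank-2 PSD operator on ℂ² ⊗ ℂ² that is not a tensor product of
single-qubit operators has two linearly independent entangled vectors in its range. -/
theorem range_contains_two_entangled_vectors
    (h : Matrix (Fin 2 × Fin 2) (Fin 2 × Fin 2) ℂ)
    (hpsd : h.PosSemidef) (hrank : h.rank = 2)
    (hnotprod : ¬ ∃ hA hB : Matrix (Fin 2) (Fin 2) ℂ, h = hA ⊗ₖ hB) :
    ∃ ψ φ : Fin 2 × Fin 2 → ℂ,
      (∃ w, ψ = h.mulVec w) ∧ (∃ w, φ = h.mulVec w) ∧
      LinearIndependent ℂ ![ψ, φ] ∧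
      (¬ ∃ u v : Fin 2 → ℂ, ∀ p : Fin 2 × Fin 2, ψ p = u p.1 * v p.2) ∧
      (¬ ∃ u v : Fin 2 → ℂ, ∀ p : Fin 2 × Fin 2, φ p = u p.1 * v p.2) := by
  classical
  set N := LinearMap.range h.mulVecLin with hN
  have hfin : Module.finrank ℂ N = 2 := hrank
  let b : Module.Basis (Fin 2) ℂ N := Module.finBasisOfFinrankEq ℂ N hfin
  set ψ₀ : Fin 2 × Fin 2 → ℂ := ((b 0 : N) : Fin 2 × Fin 2 → ℂ) with hψ₀def
  set φ₀ : Fin 2 × Fin 2 → ℂ := ((b 1 : N) : Fin 2 × Fin 2 → ℂ) with hφ₀def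
  have hψ₀N : ψ₀ ∈ N := (b 0).2
  have hφ₀N : φ₀ ∈ N := (b 1).2
  -- linear independence of the basis, in the ambient space
  have hindep : ∀ s t : ℂ, s • ψ₀ + t • φ₀ = 0 → s = 0 ∧ t = 0 := by
    intro s t hst
    have hmem : s • (b 0) + t • (b 1) = (0 : N) := by
      apply Subtype.ext
      rw [Submodule.coe_add, Submodule.coe_smul, Submodule.coe_smul, ← hψ₀def, ← hφ₀def]
      exact hst
    have hli := Fintype.linearIndependent_iff.mp b.linearIndependent ![s, t] (by
      rw [Fin.sum_univ_two]
      simpa only [Matrix.cons_val_zero, Matrix.cons_val_one, Matrix.head_cons] using hmem)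
    exact ⟨hli 0, hli 1⟩
  -- every element of the range is a combination of ψ₀ and φ₀
  have hmem : ∀ x : Fin 2 × Fin 2 → ℂ, x ∈ N → ∃ s t : ℂ, x = s • ψ₀ + t • φ₀ := by
    intro x hx
    have hrep := b.sum_repr ⟨x, hx⟩
    rw [Fin.sum_univ_two] at hrep
    refine ⟨b.repr ⟨x, hx⟩ 0, b.repr ⟨x, hx⟩ 1, ?_⟩
    have h2 := congrArg (Subtype.val) hrep
    rw [Submodule.coe_add, Submodule.coe_smul, Submodule.coe_smul, ← hψ₀def, ← hφ₀def] at h2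
    exact h2.symm
  -- columns of h are in the range
  have hcolN : ∀ q : Fin 2 × Fin 2, (fun p => h p q) ∈ N := by
    intro q
    refine ⟨Pi.single q 1, ?_⟩
    rw [Matrix.mulVecLin_apply, Matrix.mulVec_single]
    funext p; simp
  have hψ₀ne : ∃ p, ψ₀ p ≠ 0 := by
    by_contra hc
    push_neg at hc
    have h0 : (1 : ℂ) • ψ₀ + (0 : ℂ) • φ₀ = 0 := by
      funext p; simp [hc p]
    exact one_ne_zero (hindep 1 0 h0).1
  have hφ₀ne : ∃ p, φ₀ p ≠ 0 := by
    by_contra hc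
    push_neg at hc
    have h0 : (0 : ℂ) • ψ₀ + (1 : ℂ) • φ₀ = 0 := by
      funext p; simp [hc p]
    exact one_ne_zero (hindep 0 1 h0).2
  set a : ℂ := Dt ψ₀ with ha
  set cc : ℂ := Dt φ₀ with hcc
  set bb : ℂ := ψ₀ (0,0) * φ₀ (1,1) + φ₀ (0,0) * ψ₀ (1,1)
      - ψ₀ (0,1) * φ₀ (1,0) - φ₀ (0,1) * ψ₀ (1,0) with hbb
  have hDt : ∀ t : ℂ, Dt (fun p => ψ₀ p + t * φ₀ p) = a + bb * t + cc * t ^ 2 := by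
    intro t
    simp only [Dt, ha, hbb, hcc]
    ring
  by_cases hzero : a = 0 ∧ bb = 0 ∧ cc = 0
  · -- degenerate case: every vector in the range is a product vector; contradiction
    exfalso
    apply hnotprod
    obtain ⟨ha0, hb0, hc0⟩ := hzero
    obtain ⟨u, v, hpsi⟩ := prod_of_Dt (show Dt ψ₀ = 0 from ha0)
    obtain ⟨u', v', hphi⟩ := prod_of_Dt (show Dt φ₀ = 0 from hc0)
    have hsum0 : Dt (fun p => ψ₀ p + (1 : ℂ) * φ₀ p) = 0 := by
      rw [hDt]; rw [ha0, hb0, hc0]; ring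
    have hcross : (u 0 * u' 1 - u 1 * u' 0) * (v 0 * v' 1 - v 1 * v' 0) = 0 := by
      simp only [Dt, hpsi, hphi] at hsum0
      linear_combination hsum0
    obtain ⟨p₁, hp₁⟩ := hψ₀ne
    rw [hpsi] at hp₁
    have hu1 : u p₁.1 ≠ 0 := fun hx => hp₁ (by rw [hx]; ring)
    have hv1 : v p₁.2 ≠ 0 := fun hx => hp₁ (by rw [hx]; ring)
    have hs : ∀ p q, h p q = star (h q p) := fun p q => (hpsd.1.apply p q).symm
    rcases mul_eq_zero.mp hcross with hcu | hcv
    · -- u' is proportional to u : columns factor through u on the left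
      obtain ⟨lam, hlam⟩ := prop_of_cross p₁.1 hu1 hcu
      have hcol : ∀ k l : Fin 2, ∃ g : Fin 2 → ℂ,
          ∀ i j : Fin 2, h (i,j) (k,l) = u i * g j := by
        intro k l
        obtain ⟨s, t, hst⟩ := hmem _ (hcolN (k,l))
        refine ⟨fun j => s * v j + t * (lam * v' j), fun i j => ?_⟩
        have := congrFun hst (i,j)
        simp only [Pi.add_apply, Pi.smul_apply, smul_eq_mul] at this
        rw [this, hpsi (i,j), hphi (i,j), hlam i]
        ring
      exact herm_factor_left h hpsd.1 u p₁.1 hu1 hcol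
    · -- v' is proportional to v : use the swapped matrix
      obtain ⟨lam, hlam⟩ := prop_of_cross p₁.2 hv1 hcv
      set h' : Matrix (Fin 2 × Fin 2) (Fin 2 × Fin 2) ℂ :=
        Matrix.of (fun p q => h (p.2, p.1) (q.2, q.1)) with hh'
      have hherm' : h'.IsHermitian := by
        apply Matrix.IsHermitian.ext
        intro p q
        simp only [hh', Matrix.of_apply]
        exact (hs _ _).symm
      have hcol' : ∀ k l : Fin 2, ∃ g : Fin 2 → ℂ,
          ∀ i j : Fin 2, h' (i,j) (k,l) = v i * g j := by
        intro k l
        obtain ⟨s, t, hst⟩ := hmem _ (hcolN (l,k))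
        refine ⟨fun j => s * u j + t * (lam * u' j), fun i j => ?_⟩
        have := congrFun hst (j,i)
        simp only [Pi.add_apply, Pi.smul_apply, smul_eq_mul] at this
        simp only [hh', Matrix.of_apply]
        rw [this, hpsi (j,i), hphi (j,i), hlam i]
        ring
      obtain ⟨hA, hB, hAB⟩ := herm_factor_left h' hherm' v p₁.2 hv1 hcol'
      refine ⟨hB, hA, ?_⟩
      ext ⟨i, j⟩ ⟨k, l⟩
      have := congrFun (congrFun hAB (j, i)) (l, k)
      simp only [hh', Matrix.of_apply, Matrix.kroneckerMap_apply] at this ⊢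
      rw [this]; ring
  · -- nondegenerate case: the quadratic is nonzero, pick two non-roots
    set P : Polynomial ℂ := Polynomial.C cc * Polynomial.X ^ 2
        + Polynomial.C bb * Polynomial.X + Polynomial.C a with hP
    have hPeval : ∀ t : ℂ, P.eval t = a + bb * t + cc * t ^ 2 := by
      intro t; simp [hP]; ring
    have hPne : P ≠ 0 := by
      intro hP0
      apply hzero
      have h0 : ∀ t : ℂ, a + bb * t + cc * t ^ 2 = 0 := by
        intro t; rw [← hPeval, hP0]; simp
      have e0 := h0 0
      have e1 := h0 1
      have e2 := h0 2
      refine ⟨by linear_combination e0, by linear_combination 2 * e1 - (3/2) * e0 - (1/2) * e2,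
        by linear_combination (1/2) * e0 - e1 + (1/2) * e2⟩
    have hdeg : P.natDegree ≤ 2 := by
      rw [hP]; compute_degree
    set S : Finset ℂ := (Finset.range 5).image (Nat.cast : ℕ → ℂ) with hS
    have hScard : S.card = 5 := by
      rw [hS, Finset.card_image_of_injective _ Nat.cast_injective, Finset.card_range]
    have hbad : (S.filter fun t => P.eval t = 0) ⊆ P.roots.toFinset := by
      intro t ht
      rw [Finset.mem_filter] at ht
      rw [Multiset.mem_toFinset, Polynomial.mem_roots hPne]
      exact ht.2
    have hbadcard : (S.filter fun t => P.eval t = 0).card ≤ 2 := by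
      calc (S.filter fun t => P.eval t = 0).card
          ≤ P.roots.toFinset.card := Finset.card_le_card hbad
        _ ≤ Multiset.card P.roots := Multiset.toFinset_card_le _
        _ ≤ P.natDegree := P.card_roots'
        _ ≤ 2 := hdeg
    have hgoodcard : 1 < (S.filter fun t => ¬ P.eval t = 0).card := by
      have hsplit := Finset.card_filter_add_card_filter_not
        (s := S) (p := fun t => P.eval t = 0)
      simp only [hScard] at hsplit
      omega
    obtain ⟨t₁, ht₁, t₂, ht₂, htne⟩ := Finset.one_lt_card.mp hgoodcard
    rw [Finset.mem_filter] at ht₁ ht₂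
    obtain ⟨w₁, hw₁⟩ := hψ₀N
    obtain ⟨w₂, hw₂⟩ := hφ₀N
    rw [Matrix.mulVecLin_apply] at hw₁ hw₂
    refine ⟨fun p => ψ₀ p + t₁ * φ₀ p, fun p => ψ₀ p + t₂ * φ₀ p,
      ⟨w₁ + t₁ • w₂, ?_⟩, ⟨w₁ + t₂ • w₂, ?_⟩, ?_, ?_, ?_⟩
    · funext p
      rw [Matrix.mulVec_add, Matrix.mulVec_smul, hw₁, hw₂]
      simp
    · funext p
      rw [Matrix.mulVec_add, Matrix.mulVec_smul, hw₁, hw₂]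
      simp
    · rw [LinearIndependent.pair_iff]
      intro s t hst
      have hcomb : (s + t) • ψ₀ + (s * t₁ + t * t₂) • φ₀ = 0 := by
        funext p
        have := congrFun hst p
        simp only [Pi.add_apply, Pi.smul_apply, smul_eq_mul, Pi.zero_apply] at this ⊢
        linear_combination this
      obtain ⟨e1, e2⟩ := hindep _ _ hcomb
      have hs0 : s * (t₁ - t₂) = 0 := by linear_combination e2 - t₂ * e1
      have hs : s = 0 := by
        rcases mul_eq_zero.mp hs0 with hx | hx
        · exact hx
        · exact absurd (by linear_combination hx) htne
      exact ⟨hs, by linear_combination e1 - hs⟩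
    · apply entangled_of_Dt
      rw [hDt, ← hPeval]
      exact ht₁.2
    · apply entangled_of_Dt
      rw [hDt, ← hPeval]
      exact ht₂.2
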